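/- Let γ > 0, ρ ∈ (−1, 1), X > 0, σˣ > 0, λ, λˣ, P_X ∈ ℝ, O ≠ 0, V_X ≠ 0, and suppose the derivative is equity-neutral, i.e. its delta Δ = 0, so the variance matrix Σ is the 2×2 diagonal-structured matrix with rows (√X, 0) and (0, V_X·σˣ·√X/O). Then the unique solution π = (πˢ, πᴼ) of Σᵀπ = η*, where η* = (1/γ)(ΦΦᵀ)⁻¹(√X·(λ + ρσˣP_X), √X·(λˣ + σˣP_X)), has stock allocation πˢ = (λ − ρλˣ)/(γ(1−ρ²)), which does not depend on O, V_X, σˣ or P_X; consequently, for every equity-neutral derivative choice, the risk exposure satisfies ‖π‖₁ = |πˢ| + |πᴼ| ≥ |λ − ρλˣ|/(γ(1−ρ²)). (Invariance of the stock allocation and the natural lower bound on risk exposure when completing the market with VIX products.) -/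

import Mathlib

open Matrix

/-- With an equity-neutral (delta-zero) derivative, the unique solution of Σᵀπ = η*
has a stock allocation independent of the derivative choice, giving a natural lower
bound on the ℓ1 risk exposure. -/
theorem equity_neutral_invariance (γ ρ X σx lam lamX PX O VX : ℝ)
    (hγ : 0 < γ) (hρ1 : -1 < ρ) (hρ2 : ρ < 1) (hX : 0 < X) (hσx : 0 < σx)
    (hO : O ≠ 0) (hVX : VX ≠ 0)
    (A : Matrix (Fin 2) (Fin 2) ℝ)
    (hA : A = !![Real.sqrt X, 0; 0, VX * σx * Real.sqrt X / O])
    (Φ : Matrix (Fin 2) (Fin 2) ℝ)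
    (hΦ : Φ = !![1, 0; ρ, Real.sqrt (1 - ρ ^ 2)])
    (ηstar : Fin 2 → ℝ)
    (hη : ηstar = (1 / γ) • ((Φ * Φᵀ)⁻¹ *ᵥ
      ![Real.sqrt X * (lam + ρ * σx * PX), Real.sqrt X * (lamX + σx * PX)])) :
    (∃! π : Fin 2 → ℝ, Aᵀ *ᵥ π = ηstar) ∧
      ∀ π : Fin 2 → ℝ, Aᵀ *ᵥ π = ηstar →
        π 0 = (lam - ρ * lamX) / (γ * (1 - ρ ^ 2)) ∧
          |lam - ρ * lamX| / (γ * (1 - ρ ^ 2)) ≤ |π 0| + |π 1| := by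
  have hden : 0 < 1 - ρ ^ 2 := by nlinarith
  have hs : Real.sqrt (1 - ρ ^ 2) ^ 2 = 1 - ρ ^ 2 := Real.sq_sqrt hden.le
  have hsX : (0:ℝ) < Real.sqrt X := Real.sqrt_pos.mpr hX
  have hsX' : Real.sqrt X ≠ 0 := hsX.ne'
  have hc : VX * σx * Real.sqrt X / O ≠ 0 := by
    apply div_ne_zero _ hO
    exact mul_ne_zero (mul_ne_zero hVX hσx.ne') hsX'
  have hM : Φ * Φᵀ = !![1, ρ; ρ, 1] := by
    subst hΦ
    ext i j
    fin_cases i <;> fin_cases j <;>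
      simp [Matrix.mul_apply, Fin.sum_univ_two, Matrix.transpose_apply,
        Matrix.vecHead, Matrix.vecTail] <;> nlinarith [hs]
  have hMinv : (Φ * Φᵀ)⁻¹ = (1 / (1 - ρ ^ 2)) • !![1, -ρ; -ρ, 1] := by
    apply Matrix.inv_eq_right_inv
    rw [hM]
    ext i j
    fin_cases i <;> fin_cases j <;>
      · simp [Matrix.mul_apply, Fin.sum_univ_two, Matrix.one_apply]
        field_simp
        try ring
  have hη0 : ηstar 0 = Real.sqrt X * (lam - ρ * lamX) / (γ * (1 - ρ ^ 2)) := by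
    rw [hη, hMinv]
    simp [Matrix.mulVec, dotProduct, Fin.sum_univ_two]
    field_simp
    ring
  -- the value of π 0 for any solution
  have key : ∀ π : Fin 2 → ℝ, Aᵀ *ᵥ π = ηstar →
      π 0 = (lam - ρ * lamX) / (γ * (1 - ρ ^ 2)) := by
    intro π hπ
    have h0 : (Aᵀ *ᵥ π) 0 = ηstar 0 := by rw [hπ]
    rw [hA] at h0
    simp [Matrix.mulVec, dotProduct, Fin.sum_univ_two, Matrix.transpose_apply] at h0
    rw [hη0] at h0
    field_simp at h0
    have := mul_left_cancel₀ hsX' (by rw [← h0]; ring : Real.sqrt X * (π 0 * (γ * (1 - ρ ^ 2))) = Real.sqrt X * (lam - ρ * lamX))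
    field_simp
    linarith [this]
  -- explicit solution
  set c : ℝ := VX * σx * Real.sqrt X / O with hcdef
  have hAT : Aᵀ = !![Real.sqrt X, 0; 0, c] := by
    rw [hA]; ext i j; fin_cases i <;> fin_cases j <;> simp [Matrix.transpose_apply]
  refine ⟨⟨![(lam - ρ * lamX) / (γ * (1 - ρ ^ 2)) * Real.sqrt X / Real.sqrt X, ηstar 1 / c], ?_, ?_⟩, ?_⟩
  · funext i
    fin_cases i
    · rw [hAT]
      simp [Matrix.mulVec, dotProduct, Fin.sum_univ_two]
      rw [hη0]
      field_simp
    · rw [hAT]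
      simp [Matrix.mulVec, dotProduct, Fin.sum_univ_two]
      field_simp
  · intro π hπ
    funext i
    have h1 : (Aᵀ *ᵥ π) 1 = ηstar 1 := by rw [hπ]
    rw [hAT] at h1
    simp [Matrix.mulVec, dotProduct, Fin.sum_univ_two] at h1
    fin_cases i
    · show π 0 = (lam - ρ * lamX) / (γ * (1 - ρ ^ 2)) * Real.sqrt X / Real.sqrt X
      rw [key π hπ]
      field_simp
    · show π 1 = ηstar 1 / c
      rw [← h1]
      field_simp
      try ring
  · intro π hπ
    have h0 := key π hπ
    refine ⟨h0, ?_⟩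
    have : |π 0| = |lam - ρ * lamX| / (γ * (1 - ρ ^ 2)) := by
      rw [h0, abs_div, abs_of_pos (by positivity : (0:ℝ) < γ * (1 - ρ ^ 2))]
    rw [← this]
    linarith [abs_nonneg (π 1)]
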